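/- Let ρ be a density matrix on a D = d₁·d₂ dimensional space with eigenvalues ρ₁ ≥ ⋯ ≥ ρ_{d²} where d₁ = d₂ = d ≥ 2 and d² > 3. If ρ₁ > 3/d², then there exists a unitary U such that U ρ U† is entangled with respect to the fixed factorization C^d ⊗ C^d. -/

import Mathlib

open Matrix
open scoped Kronecker ComplexOrder InnerProductSpace

noncomputable section

/-- A density matrix: positive semi-definite (hence Hermitian) with trace 1. -/
def IsDensity {n : Type*} [Fintype n] [DecidableEq n] (ρ : Matrix n n ℂ) : Prop :=
  ρ.PosSemidef ∧ ρ.trace = 1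

/-- Separability: a convex combination of tensor products of density matrices. -/
def SepState {d₁ d₂ : ℕ} (ρ : Matrix (Fin d₁ × Fin d₂) (Fin d₁ × Fin d₂) ℂ) : Prop :=
  ∃ (n : ℕ) (w : Fin n → ℝ) (σ₁ : Fin n → Matrix (Fin d₁) (Fin d₁) ℂ)
    (σ₂ : Fin n → Matrix (Fin d₂) (Fin d₂) ℂ),
    (∀ i, 0 ≤ w i) ∧ (∑ i, w i = 1) ∧ (∀ i, IsDensity (σ₁ i)) ∧ (∀ i, IsDensity (σ₂ i)) ∧
    ρ = ∑ i, (w i : ℂ) • (σ₁ i ⊗ₖ σ₂ i)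

-- Kronecker of PSD is PSD
lemma kron_conjTranspose {l m n p : Type*} (A : Matrix l m ℂ) (B : Matrix n p ℂ) :
    (A ⊗ₖ B)ᴴ = Aᴴ ⊗ₖ Bᴴ := by
  ext ⟨i, j⟩ ⟨k, r⟩
  simp [Matrix.conjTranspose_apply, Matrix.kroneckerMap_apply]

lemma kron_posSemidef {m n : Type*} [Fintype m] [Fintype n] [DecidableEq m] [DecidableEq n]
    {A : Matrix m m ℂ} {B : Matrix n n ℂ} (hA : A.PosSemidef) (hB : B.PosSemidef) :
    (A ⊗ₖ B).PosSemidef := by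
  exact hA.kronecker hB

/-- A "Bell-type" two-point vector. -/
def twoPt {κ : Type*} [Fintype κ] [DecidableEq κ] (a b : κ) (ε : ℂ) :
    EuclideanSpace ℂ κ :=
  ((Real.sqrt 2)⁻¹ : ℝ) • (EuclideanSpace.single a (1 : ℂ) + ε • EuclideanSpace.single b 1)

lemma twoPt_apply {κ : Type*} [Fintype κ] [DecidableEq κ] (a b : κ) (ε : ℂ) (p : κ) :
    twoPt a b ε p = ((Real.sqrt 2 : ℝ) : ℂ)⁻¹ *
      ((if p = a then 1 else 0) + ε * (if p = b then 1 else 0)) := by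
  simp only [twoPt, PiLp.smul_apply, PiLp.add_apply, EuclideanSpace.single_apply,
    Complex.real_smul, smul_eq_mul]
  push_cast
  split_ifs <;> ring

lemma inner_twoPt_right {κ : Type*} [Fintype κ] [DecidableEq κ] (a b : κ) (ε : ℂ)
    (w : EuclideanSpace ℂ κ) :
    ⟪twoPt a b ε, w⟫_ℂ = ((Real.sqrt 2 : ℝ) : ℂ)⁻¹ * (w a + (starRingEnd ℂ) ε * w b) := by
  simp [twoPt, inner_smul_left, inner_add_left, EuclideanSpace.inner_single_left,
    Complex.conj_ofReal, apply_ite (starRingEnd ℂ), ite_mul, Finset.sum_ite_eq',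
    _root_.map_mul]
  ring

lemma sqrt2_inv_sq : ((Real.sqrt 2 : ℝ) : ℂ)⁻¹ * ((Real.sqrt 2 : ℝ) : ℂ)⁻¹ = (2 : ℂ)⁻¹ := by
  have h : ((Real.sqrt 2 : ℝ) : ℂ) * ((Real.sqrt 2 : ℝ) : ℂ) = 2 := by
    norm_cast
    rw [Real.mul_self_sqrt] ; norm_num
  rw [← mul_inv, h]

lemma inner_twoPt_twoPt {κ : Type*} [Fintype κ] [DecidableEq κ] (a b c e : κ) (ε ε' : ℂ) :
    ⟪twoPt a b ε, twoPt c e ε'⟫_ℂ = (2 : ℂ)⁻¹ *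
      (((if a = c then 1 else 0) + ε' * (if a = e then 1 else 0)) +
        (starRingEnd ℂ) ε * ((if b = c then 1 else 0) + ε' * (if b = e then 1 else 0))) := by
  rw [inner_twoPt_right, twoPt_apply, twoPt_apply]
  linear_combination (((if a = c then (1:ℂ) else 0) + ε' * (if a = e then 1 else 0)) +
    (starRingEnd ℂ) ε * ((if b = c then 1 else 0) + ε' * (if b = e then 1 else 0))) * sqrt2_inv_sq

lemma twoPt_apply_fst {κ : Type*} [Fintype κ] [DecidableEq κ] {a b : κ} (hab : a ≠ b) (ε : ℂ) :
    twoPt a b ε a = ((Real.sqrt 2 : ℝ) : ℂ)⁻¹ := by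
  rw [twoPt_apply, if_pos rfl, if_neg hab]; ring

lemma twoPt_apply_snd {κ : Type*} [Fintype κ] [DecidableEq κ] {a b : κ} (hab : b ≠ a) (ε : ℂ) :
    twoPt a b ε b = ((Real.sqrt 2 : ℝ) : ℂ)⁻¹ * ε := by
  rw [twoPt_apply, if_pos rfl, if_neg hab]; ring

lemma twoPt_apply_other {κ : Type*} [Fintype κ] [DecidableEq κ] {a b p : κ} (hpa : p ≠ a)
    (hpb : p ≠ b) (ε : ℂ) : twoPt a b ε p = 0 := by
  rw [twoPt_apply, if_neg hpa, if_neg hpb]; ring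

/-- The witness vector `e_q - e_r`. -/
def wit {κ : Type*} [DecidableEq κ] (q r : κ) : κ → ℂ :=
  fun p => (if p = q then 1 else 0) - (if p = r then 1 else 0)

lemma wit_quadform {κ : Type*} [Fintype κ] [DecidableEq κ] (q r : κ) (hqr : q ≠ r)
    (M : Matrix κ κ ℂ) :
    dotProduct (star (wit q r)) (M *ᵥ wit q r) =
      M q q + M r r - M q r - M r q := by
  simp only [dotProduct, Matrix.mulVec, Pi.star_apply, wit, star_sub,
    apply_ite (star : ℂ → ℂ), star_one, star_zero, dotProduct,
    mul_sub, sub_mul, ite_mul, one_mul, zero_mul, mul_ite, mul_one, mul_zero,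
    Finset.sum_sub_distrib, Finset.sum_ite_eq', Finset.mem_univ, if_true]
  ring

lemma f_kron_nonneg {d : ℕ} {A B : Matrix (Fin d) (Fin d) ℂ}
    (hA : A.PosSemidef) (hB : B.PosSemidef) (a0 a1 : Fin d) (h01 : a0 ≠ a1) :
    0 ≤ (A ⊗ₖ B) (a0, a1) (a0, a1) + (A ⊗ₖ B) (a1, a0) (a1, a0)
      - (A ⊗ₖ B) (a0, a0) (a1, a1) - (A ⊗ₖ B) (a1, a1) (a0, a0) := by
  have h := (kron_posSemidef hA hB.transpose).dotProduct_mulVec_nonneg (wit (a0, a1) (a1, a0))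
  rw [wit_quadform _ _ (by simp [Prod.ext_iff, h01])] at h
  simpa [Matrix.kroneckerMap_apply, Matrix.transpose_apply] using h

lemma sep_f_nonneg {d : ℕ} {σ : Matrix (Fin d × Fin d) (Fin d × Fin d) ℂ}
    (hsep : SepState σ) (a0 a1 : Fin d) (h01 : a0 ≠ a1) :
    0 ≤ σ (a0, a1) (a0, a1) + σ (a1, a0) (a1, a0)
      - σ (a0, a0) (a1, a1) - σ (a1, a1) (a0, a0) := by
  obtain ⟨n, w, σ1, σ2, hw, -, hσ1, hσ2, rfl⟩ := hsep
  simp only [Matrix.sum_apply, Matrix.smul_apply, smul_eq_mul,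
    ← Finset.sum_sub_distrib, ← Finset.sum_add_distrib, ← mul_sub, ← mul_add]
  refine Finset.sum_nonneg fun i _ => mul_nonneg ?_ ?_
  · exact Complex.zero_le_real.mpr (hw i)
  · have h := f_kron_nonneg (hσ1 i).1 (hσ2 i).1 a0 a1 h01
    convert h using 1

/-- If the largest eigenvalue of a density matrix `ρ` on `ℂ^d ⊗ ℂ^d` exceeds
`3/d²`, then there is a unitary `U` such that `U ρ U†` is entangled with respect
to the fixed factorization. -/
theorem exists_unitary_entangled {d : ℕ} (hd : 2 ≤ d) (h3 : 3 < d ^ 2)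
    (ρ : Matrix (Fin d × Fin d) (Fin d × Fin d) ℂ)
    (hρ : IsDensity ρ) (hH : ρ.IsHermitian)
    (hbig : ∃ i, 3 / (d ^ 2 : ℝ) < hH.eigenvalues i) :
    ∃ U ∈ Matrix.unitaryGroup (Fin d × Fin d) ℂ,
      ¬ SepState (U * ρ * Uᴴ) := by
  classical
  obtain ⟨i0, hi0⟩ := hbig
  have hnn : ∀ i, 0 ≤ hH.eigenvalues i := fun i => hρ.1.eigenvalues_nonneg i
  have hcard : Fintype.card (Fin d × Fin d) = d ^ 2 := by
    simp [Fintype.card_prod, sq]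
  have hsum : ∑ i, hH.eigenvalues i = 1 := by
    have h1 : ρ.trace = ∑ i, (hH.eigenvalues i : ℂ) := by
      conv_lhs => rw [hH.spectral_theorem]
      rw [Unitary.conjStarAlgAut_apply, Matrix.trace_mul_cycle,
        Matrix.mem_unitaryGroup_iff'.mp (Matrix.IsHermitian.eigenvectorUnitary hH).2, one_mul,
        Matrix.trace_diagonal]
      rfl
    rw [hρ.2] at h1
    exact_mod_cast h1.symm
  -- the big eigenvalue is positive and exceeds 3 / d ^ 2
  have hd2pos : (0:ℝ) < (d ^ 2 : ℝ) := by positivity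
  have hi0pos : 0 < hH.eigenvalues i0 := lt_of_le_of_lt (by positivity) hi0
  -- there are three distinct indices, different from i0, with small eigenvalues
  obtain ⟨j1, j2, j3, hj1, hj2, hj3, hne12, hne13, hne23, hsmall⟩ :
      ∃ j1 j2 j3 : Fin d × Fin d, j1 ≠ i0 ∧ j2 ≠ i0 ∧ j3 ≠ i0 ∧
        j1 ≠ j2 ∧ j1 ≠ j3 ∧ j2 ≠ j3 ∧
        hH.eigenvalues j1 + hH.eigenvalues j2 + hH.eigenvalues j3 < hH.eigenvalues i0 := by
    set lam := hH.eigenvalues with hlamdef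
    set big : Finset (Fin d × Fin d) :=
      Finset.univ.filter (fun j => lam i0 / 3 ≤ lam j) with hbigdef
    have hibig : i0 ∈ big := by
      simp only [hbigdef, Finset.mem_filter, Finset.mem_univ, true_and]
      linarith
    have hcb : big.card ≤ d ^ 2 - 3 := by
      have h1 : lam i0 + ((big.card : ℝ) - 1) * (lam i0 / 3) ≤ 1 := by
        have he : ∑ j ∈ big, lam j = lam i0 + ∑ j ∈ big.erase i0, lam j :=
          (Finset.add_sum_erase big lam hibig).symm
        have h2 : (big.erase i0).card • (lam i0 / 3) ≤ ∑ j ∈ big.erase i0, lam j := by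
          refine Finset.card_nsmul_le_sum _ _ _ fun j hj => ?_
          exact (Finset.mem_filter.mp (Finset.mem_of_mem_erase hj)).2
        have h3 : ∑ j ∈ big, lam j ≤ 1 := by
          rw [← hsum]
          exact Finset.sum_le_sum_of_subset_of_nonneg (Finset.subset_univ _)
            (fun j _ _ => hnn j)
        have h4 : (big.erase i0).card = big.card - 1 := Finset.card_erase_of_mem hibig
        have h5 : 1 ≤ big.card := Finset.card_pos.mpr ⟨i0, hibig⟩
        have h6 : ((big.erase i0).card : ℝ) = (big.card : ℝ) - 1 := by
          rw [h4]; push_cast [h5]; ring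
        rw [nsmul_eq_mul, h6] at h2
        linarith
      have h7 : 3 < lam i0 * (d ^ 2 : ℝ) := by
        rw [div_lt_iff₀ hd2pos] at hi0
        linarith
      have h8 : (big.card : ℝ) < (d ^ 2 : ℝ) - 2 := by
        nlinarith [hi0pos]
      have h9 : big.card + 2 < d ^ 2 := by
        have hc : ((big.card + 2 : ℕ) : ℝ) < ((d ^ 2 : ℕ) : ℝ) := by push_cast; linarith
        exact_mod_cast hc
      omega
    set T : Finset (Fin d × Fin d) := bigᶜ with hTdef
    have hTsmall : ∀ j ∈ T, j ≠ i0 ∧ lam j < lam i0 / 3 := by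
      intro j hj
      have hjb : j ∉ big := Finset.mem_compl.mp hj
      constructor
      · rintro rfl; exact hjb hibig
      · by_contra hcon
        exact hjb (Finset.mem_filter.mpr ⟨Finset.mem_univ _, le_of_not_gt hcon⟩)
    have hcT : 3 ≤ T.card := by
      have := Finset.card_compl big (α := Fin d × Fin d)
      rw [hTdef, this, hcard]
      omega
    obtain ⟨j1, hj1T⟩ : ∃ j, j ∈ T := Finset.card_pos.mp (by omega) |>.imp fun _ h => h
    have hcT1 : 1 ≤ (T.erase j1).card := by
      rw [Finset.card_erase_of_mem hj1T]; omega
    obtain ⟨j2, hj2T⟩ : ∃ j, j ∈ T.erase j1 :=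
      Finset.card_pos.mp (by omega) |>.imp fun _ h => h
    have hcT2 : 1 ≤ ((T.erase j1).erase j2).card := by
      rw [Finset.card_erase_of_mem hj2T, Finset.card_erase_of_mem hj1T]; omega
    obtain ⟨j3, hj3T⟩ : ∃ j, j ∈ (T.erase j1).erase j2 :=
      Finset.card_pos.mp (by omega) |>.imp fun _ h => h
    have h1 := hTsmall j1 hj1T
    have h2 := hTsmall j2 (Finset.mem_of_mem_erase hj2T)
    have h3 := hTsmall j3 (Finset.mem_of_mem_erase (Finset.mem_of_mem_erase hj3T))
    refine ⟨j1, j2, j3, h1.1, h2.1, h3.1, ?_, ?_, ?_, by linarith [h1.2, h2.2, h3.2]⟩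
    · exact fun h => (Finset.ne_of_mem_erase hj2T) h.symm
    · exact fun h => (Finset.ne_of_mem_erase (Finset.mem_of_mem_erase hj3T)) h.symm
    · exact fun h => (Finset.ne_of_mem_erase hj3T) h.symm
  -- Bell-type vectors at the four distinguished coordinates
  set a0 : Fin d := ⟨0, by omega⟩ with ha0def
  set a1 : Fin d := ⟨1, by omega⟩ with ha1def
  have ha01 : a0 ≠ a1 := by simp [ha0def, ha1def, Fin.ext_iff]
  set p00 : Fin d × Fin d := (a0, a0) with hp00
  set p01 : Fin d × Fin d := (a0, a1) with hp01
  set p10 : Fin d × Fin d := (a1, a0) with hp10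
  set p11 : Fin d × Fin d := (a1, a1) with hp11
  have hne_a : p00 ≠ p01 ∧ p00 ≠ p10 ∧ p00 ≠ p11 ∧ p01 ≠ p10 ∧ p01 ≠ p11 ∧ p10 ≠ p11 := by
    refine ⟨?_, ?_, ?_, ?_, ?_, ?_⟩ <;>
      simp [hp00, hp01, hp10, hp11, Prod.ext_iff, ha0def, ha1def, Fin.ext_iff]
  obtain ⟨hq1, hq2, hq3, hq4, hq5, hq6⟩ := hne_a
  set v : (Fin d × Fin d) → EuclideanSpace ℂ (Fin d × Fin d) := fun m =>
    if m = i0 then twoPt p00 p11 1 else if m = j1 then twoPt p00 p11 (-1)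
    else if m = j2 then twoPt p01 p10 1 else if m = j3 then twoPt p01 p10 (-1) else 0
    with hvdef
  have hvi0 : v i0 = twoPt p00 p11 1 := by simp [hvdef]
  have hvj1 : v j1 = twoPt p00 p11 (-1) := by simp [hvdef, hj1]
  have hvj2 : v j2 = twoPt p01 p10 1 := by simp [hvdef, hj2, Ne.symm hne12]
  have hvj3 : v j3 = twoPt p01 p10 (-1) := by
    simp [hvdef, hj3, Ne.symm hne13, Ne.symm hne23]
  have horth : Orthonormal ℂ (Set.restrict {i0, j1, j2, j3} v) := by
    rw [orthonormal_iff_ite]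
    rintro ⟨x, hx⟩ ⟨y, hy⟩
    simp only [Set.restrict_apply, Subtype.mk.injEq]
    simp only [Set.mem_insert_iff, Set.mem_singleton_iff] at hx hy
    rcases hx with rfl | rfl | rfl | rfl <;> rcases hy with rfl | rfl | rfl | rfl <;>
      simp only [Set.restrict, Set.domRestrict_apply, hvi0, hvj1, hvj2, hvj3, inner_twoPt_twoPt] <;>
      simp [hj1, hj2, hj3, hne12, hne13, hne23, Ne.symm hj1, Ne.symm hj2, Ne.symm hj3,
        Ne.symm hne12, Ne.symm hne13, Ne.symm hne23,
        hq1, hq2, hq3, hq4, hq5, hq6, Ne.symm hq1, Ne.symm hq2, Ne.symm hq3,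
        Ne.symm hq4, Ne.symm hq5, Ne.symm hq6] <;>
      norm_num
  obtain ⟨b, hb⟩ := horth.exists_orthonormalBasis_extension_of_card_eq
    (by simp [finrank_euclideanSpace])
  have hbi0 : b i0 = twoPt p00 p11 1 := by rw [hb i0 (by simp)]; exact hvi0
  have hbj1 : b j1 = twoPt p00 p11 (-1) := by rw [hb j1 (by simp)]; exact hvj1
  have hbj2 : b j2 = twoPt p01 p10 1 := by rw [hb j2 (by simp)]; exact hvj2
  have hbj3 : b j3 = twoPt p01 p10 (-1) := by rw [hb j3 (by simp)]; exact hvj3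
  -- the unitary built from the orthonormal basis
  set W : Matrix (Fin d × Fin d) (Fin d × Fin d) ℂ :=
    Matrix.of (fun p m => b m p) with hWdef
  have hWmem : W ∈ Matrix.unitaryGroup (Fin d × Fin d) ℂ := by
    rw [Matrix.mem_unitaryGroup_iff']
    ext m m'
    have ho := orthonormal_iff_ite.mp b.orthonormal m m'
    rw [PiLp.inner_apply] at ho
    simp only [RCLike.inner_apply] at ho
    rw [Matrix.mul_apply, Matrix.one_apply]
    rw [← ho]
    congr 1
    ext j
    rw [mul_comm]
    simp [hWdef, Matrix.star_apply, RCLike.star_def]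
  set V : Matrix (Fin d × Fin d) (Fin d × Fin d) ℂ :=
    (Matrix.IsHermitian.eigenvectorUnitary hH : Matrix (Fin d × Fin d) (Fin d × Fin d) ℂ)
    with hVdef
  have hVmem : V ∈ Matrix.unitaryGroup (Fin d × Fin d) ℂ :=
    (Matrix.IsHermitian.eigenvectorUnitary hH).2
  refine ⟨W * star V, mul_mem hWmem (Unitary.star_mem hVmem), ?_⟩
  intro hsep
  -- rewrite the conjugated state
  have hVV : star V * V = 1 := Matrix.mem_unitaryGroup_iff'.mp hVmem
  set D : Matrix (Fin d × Fin d) (Fin d × Fin d) ℂ :=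
    Matrix.diagonal (RCLike.ofReal ∘ hH.eigenvalues) with hDdef
  have key : W * star V * ρ * (W * star V)ᴴ = W * D * star W := by
    rw [← Matrix.star_eq_conjTranspose, StarMul.star_mul, star_star]
    conv_lhs => rw [hH.spectral_theorem, Unitary.conjStarAlgAut_apply, ← hVdef, ← hDdef]
    calc W * star V * (V * D * star V) * (V * star W)
        = W * ((star V * V) * D * (star V * V)) * star W := by noncomm_ring
      _ = W * D * star W := by rw [hVV]; simp

  have hentry : ∀ p q, (W * D * star W) p q
      = ∑ m, (hH.eigenvalues m : ℂ) * (b m p * (starRingEnd ℂ) (b m q)) := by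
    intro p q
    rw [Matrix.mul_apply]
    refine Finset.sum_congr rfl fun m _ => ?_
    rw [Matrix.mul_diagonal]
    simp [hWdef, hDdef, Matrix.star_apply, RCLike.star_def]
    ring
  -- apply the separability inequality
  have hge := sep_f_nonneg hsep a0 a1 ha01
  rw [key] at hge
  rw [show ((a0, a1) : Fin d × Fin d) = p01 from rfl,
    show ((a1, a0) : Fin d × Fin d) = p10 from rfl,
    show ((a0, a0) : Fin d × Fin d) = p00 from rfl,
    show ((a1, a1) : Fin d × Fin d) = p11 from rfl] at hge
  -- compute the quantity
  set g : (Fin d × Fin d) → ℂ := fun m =>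
    b m p01 * (starRingEnd ℂ) (b m p01) + b m p10 * (starRingEnd ℂ) (b m p10)
    - b m p00 * (starRingEnd ℂ) (b m p11) - b m p11 * (starRingEnd ℂ) (b m p00)
    with hgdef
  have hX : (W * D * star W) p01 p01 + (W * D * star W) p10 p10
      - (W * D * star W) p00 p11 - (W * D * star W) p11 p00
      = ∑ m, (hH.eigenvalues m : ℂ) * g m := by
    simp only [hentry, ← Finset.sum_add_distrib, ← Finset.sum_sub_distrib]
    refine Finset.sum_congr rfl fun m _ => ?_
    rw [hgdef]
    ring
  have hzero : ∀ m, m ∉ ({i0, j1, j2, j3} : Finset (Fin d × Fin d)) → g m = 0 := by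
    intro m hm
    simp only [Finset.mem_insert, Finset.mem_singleton, not_or] at hm
    obtain ⟨hm0, hm1, hm2, hm3⟩ := hm
    have hcomp : ∀ (k : Fin d × Fin d), k ∈ ({i0, j1, j2, j3} : Finset (Fin d × Fin d)) →
        ⟪b k, b m⟫_ℂ = 0 := by
      intro k hk
      rw [orthonormal_iff_ite.mp b.orthonormal k m]
      simp only [Finset.mem_insert, Finset.mem_singleton] at hk
      rcases hk with rfl | rfl | rfl | rfl
      · exact if_neg (Ne.symm hm0)
      · exact if_neg (Ne.symm hm1)
      · exact if_neg (Ne.symm hm2)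
      · exact if_neg (Ne.symm hm3)
    have e1 := hcomp i0 (by simp)
    have e2 := hcomp j1 (by simp)
    have e3 := hcomp j2 (by simp)
    have e4 := hcomp j3 (by simp)
    rw [hbi0, inner_twoPt_right] at e1
    rw [hbj1, inner_twoPt_right] at e2
    rw [hbj2, inner_twoPt_right] at e3
    rw [hbj3, inner_twoPt_right] at e4
    have hs2 : ((Real.sqrt 2 : ℝ) : ℂ)⁻¹ ≠ 0 := by
      have h2 : Real.sqrt 2 ≠ 0 := by positivity
      simp [inv_eq_zero, Complex.ofReal_eq_zero, h2]
    rw [mul_eq_zero] at e1 e2 e3 e4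
    replace e1 := e1.resolve_left hs2
    replace e2 := e2.resolve_left hs2
    replace e3 := e3.resolve_left hs2
    replace e4 := e4.resolve_left hs2
    simp only [_root_.map_one, map_neg, one_mul, neg_mul] at e1 e2 e3 e4
    have hb00 : b m p00 = 0 := by linear_combination (e1 + e2) / 2
    have hb11 : b m p11 = 0 := by linear_combination (e1 - e2) / 2
    have hb01 : b m p01 = 0 := by linear_combination (e3 + e4) / 2
    have hb10 : b m p10 = 0 := by linear_combination (e3 - e4) / 2
    rw [hgdef]
    simp [hb00, hb11, hb01, hb10]
  have hS : ∑ m, (hH.eigenvalues m : ℂ) * g m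
      = ∑ m ∈ ({i0, j1, j2, j3} : Finset (Fin d × Fin d)), (hH.eigenvalues m : ℂ) * g m := by
    refine (Finset.sum_subset (Finset.subset_univ _) fun x _ hx => ?_).symm
    rw [hzero x hx, mul_zero]
  -- evaluate g on the four special indices
  have hr : (starRingEnd ℂ) (((Real.sqrt 2 : ℝ) : ℂ)⁻¹) = ((Real.sqrt 2 : ℝ) : ℂ)⁻¹ := by
    simp [map_inv₀, Complex.conj_ofReal]
  have hgi0 : g i0 = -1 := by
    rw [hgdef]
    simp only [hbi0, twoPt_apply_other hq1.symm hq5, twoPt_apply_other hq2.symm hq6,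
      twoPt_apply_fst hq3, twoPt_apply_snd hq3.symm, _root_.map_mul, hr, _root_.map_one]
    linear_combination (-2 : ℂ) * sqrt2_inv_sq
  have hgj1 : g j1 = 1 := by
    rw [hgdef]
    simp only [hbj1, twoPt_apply_other hq1.symm hq5, twoPt_apply_other hq2.symm hq6,
      twoPt_apply_fst hq3, twoPt_apply_snd hq3.symm, _root_.map_mul, hr, map_neg,
      _root_.map_one]
    linear_combination (2 : ℂ) * sqrt2_inv_sq
  have hgj2 : g j2 = 1 := by
    rw [hgdef]
    simp only [hbj2, twoPt_apply_other hq1 hq2, twoPt_apply_other hq5.symm hq6.symm,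
      twoPt_apply_fst hq4, twoPt_apply_snd hq4.symm, _root_.map_mul, hr, _root_.map_one]
    linear_combination (2 : ℂ) * sqrt2_inv_sq
  have hgj3 : g j3 = 1 := by
    rw [hgdef]
    simp only [hbj3, twoPt_apply_other hq1 hq2, twoPt_apply_other hq5.symm hq6.symm,
      twoPt_apply_fst hq4, twoPt_apply_snd hq4.symm, _root_.map_mul, hr, map_neg,
      _root_.map_one]
    linear_combination (2 : ℂ) * sqrt2_inv_sq
  -- sum over the four indices
  have hfourset : ∑ m ∈ ({i0, j1, j2, j3} : Finset (Fin d × Fin d)),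
      (hH.eigenvalues m : ℂ) * g m
      = ((hH.eigenvalues j1 + hH.eigenvalues j2 + hH.eigenvalues j3
          - hH.eigenvalues i0 : ℝ) : ℂ) := by
    rw [Finset.sum_insert (by simp [Ne.symm hj1, Ne.symm hj2, Ne.symm hj3]),
      Finset.sum_insert (by simp [hne12, hne13]),
      Finset.sum_insert (by simp [hne23]),
      Finset.sum_singleton]
    rw [hgi0, hgj1, hgj2, hgj3]
    push_cast
    ring
  rw [hX, hS, hfourset] at hge
  rw [Complex.zero_le_real] at hge
  linarith
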